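/- arXiv:1405.1540 — 5 statements merged into one kernel-verified Lean document; each statement's English description precedes it below -/
import Mathlib

section
/- Let G be a unimodular locally compact group, U a compact open subgroup, and ω : G → ℂ a continuous U-biinvariant function with ω(e) = 1 (i.e. ω satisfies conditions (i) and (ii) of the definition of a spherical function). Then ω satisfies the functional equation ∫_U ω(g₁ u g₂) dμ(u) = ω(g₁)ω(g₂) for all g₁,g₂ ∈ G if and only if for each f ∈ ℋ(G,U) there exists λ_f ∈ ℂ such that f * ω = λ_f ω, where (f*ω)(g) = ∫_G f(h) ω(h⁻¹g) dμ(h). -/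
open MeasureTheory Complex ComplexOrder
open scoped Pointwise

noncomputable section

/-- A function `f : G → ℂ` is `U`-biinvariant. -/
def IsBiinvariant {G : Type*} [Group G] (U : Subgroup G) (f : G → ℂ) : Prop :=
  ∀ (g : G), ∀ u₁ ∈ U, ∀ u₂ ∈ U, f (u₁ * g * u₂) = f g

/-- Membership in the Hecke algebra `ℋ(G,U)`: compactly supported `U`-biinvariant functions. -/
def IsHeckeFun {G : Type*} [Group G] [TopologicalSpace G] (U : Subgroup G) (f : G → ℂ) : Prop :=
  HasCompactSupport f ∧ IsBiinvariant U f

/-- Convolution of two functions with respect to `μ`. -/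
def convFun {G : Type*} [Group G] [MeasurableSpace G] (μ : Measure G) (f₁ f₂ : G → ℂ) :
    G → ℂ :=
  fun g => ∫ h, f₁ h * f₂ (h⁻¹ * g) ∂μ

/-- The involution `f^*(g) = conj (f g⁻¹)`. -/
def starFun {G : Type*} [Group G] (f : G → ℂ) : G → ℂ :=
  fun g => (starRingEnd ℂ) (f g⁻¹)

/-- `(G,U)` is a Gelfand pair: the Hecke algebra is commutative. -/
def IsGelfandPair {G : Type*} [Group G] [TopologicalSpace G] [MeasurableSpace G]
    (μ : Measure G) (U : Subgroup G) : Prop :=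
  ∀ f₁ f₂ : G → ℂ, IsHeckeFun U f₁ → IsHeckeFun U f₂ → convFun μ f₁ f₂ = convFun μ f₂ f₁

/-- A spherical function for `(G,U)`. -/
def IsSpherical {G : Type*} [Group G] [TopologicalSpace G] [MeasurableSpace G]
    (μ : Measure G) (U : Subgroup G) (ω : G → ℂ) : Prop :=
  Continuous ω ∧ ω 1 = 1 ∧ IsBiinvariant U ω ∧
    ∀ g₁ g₂ : G, (∫ u in (U : Set G), ω (g₁ * u * g₂) ∂μ) = ω g₁ * ω g₂

/-- The character `τ_ω` associated to a spherical function `ω`. -/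
def tauOmega {G : Type*} [Group G] [MeasurableSpace G] (μ : Measure G) (ω : G → ℂ)
    (f : G → ℂ) : ℂ :=
  ∫ g, f g * ω g⁻¹ ∂μ

/-- A function `ω : G → ℂ` is positive definite. -/
def IsPosDefFun {G : Type*} [Group G] (ω : G → ℂ) : Prop :=
  ∀ (m : ℕ) (s : Fin m → G) (z : Fin m → ℂ),
    0 ≤ ∑ j : Fin m, ∑ k : Fin m, (starRingEnd ℂ) (z j) * z k * ω ((s j)⁻¹ * s k)

section AuxLemmas

variable {G : Type*} [Group G] [TopologicalSpace G] [IsTopologicalGroup G]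
  [LocallyCompactSpace G] [T2Space G] [MeasurableSpace G] [BorelSpace G]

/-- A `U`-biinvariant function is continuous when `U` is open (it is locally constant). -/
lemma biinv_continuous {U : Subgroup G} (hUopen : IsOpen (U : Set G)) {f : G → ℂ}
    (hbi : IsBiinvariant U f) : Continuous f := by
  apply IsLocallyConstant.continuous
  intro s
  rw [isOpen_iff_mem_nhds]
  intro g hg
  refine Filter.mem_of_superset ((hUopen.smul g).mem_nhds ⟨1, one_mem U, by simp⟩) ?_
  rintro x ⟨u, hu, rfl⟩
  have h1 : f (g * u) = f g := by simpa using hbi g 1 (one_mem U) u hu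
  show f (g • u) ∈ s
  simpa [smul_eq_mul, h1] using hg

/-- Left translation by an element of `U` preserves integrals over `U`. -/
lemma setIntegral_U_mul_left {U : Subgroup G} (hUopen : IsOpen (U : Set G))
    (μ : Measure G) [μ.IsHaarMeasure] {u₀ : G} (hu₀ : u₀ ∈ U) (F : G → ℂ) :
    ∫ u in (U : Set G), F (u₀ * u) ∂μ = ∫ u in (U : Set G), F u ∂μ := by
  have hUm : MeasurableSet (U : Set G) := hUopen.measurableSet
  rw [← integral_indicator hUm, ← integral_indicator hUm]
  have hfun : (U : Set G).indicator (fun u => F (u₀ * u))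
      = fun u => (U : Set G).indicator F (u₀ * u) := by
    funext u
    by_cases hu : u ∈ U
    · rw [Set.indicator_of_mem hu, Set.indicator_of_mem]
      exact mul_mem hu₀ hu
    · rw [Set.indicator_of_notMem hu, Set.indicator_of_notMem]
      intro h
      have he : u = u₀⁻¹ * (u₀ * u) := by group
      exact hu (by rw [he]; exact mul_mem (inv_mem hu₀) h)
  rw [hfun, integral_mul_left_eq_self ((U : Set G).indicator F) u₀]

/-- Indicator of `U` is continuous (as `U` is clopen). -/
lemma indicator_U_continuous {U : Subgroup G} (hUopen : IsOpen (U : Set G)) :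
    Continuous ((U : Set G).indicator (fun _ => (1:ℂ))) := by
  apply biinv_continuous hUopen
  intro x u₁ hu₁ u₂ hu₂
  have hiff : u₁ * x * u₂ ∈ U ↔ x ∈ U := by
    constructor
    · intro h
      have he : x = u₁⁻¹ * (u₁ * x * u₂) * u₂⁻¹ := by group
      rw [he]
      exact mul_mem (mul_mem (inv_mem hu₁) h) (inv_mem hu₂)
    · intro h
      exact mul_mem (mul_mem hu₁ h) hu₂
  by_cases hx : x ∈ U
  · rw [Set.indicator_of_mem hx, Set.indicator_of_mem (hiff.mpr hx)]
  · rw [Set.indicator_of_notMem hx, Set.indicator_of_notMem (fun h => hx (hiff.mp h))]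

/-- Key computation: convolution of a Hecke function with a continuous function equals
the averaged integrand. -/
lemma conv_eq_average {U : Subgroup G} (hUcomp : IsCompact (U : Set G))
    (hUopen : IsOpen (U : Set G)) (μ : Measure G) [μ.IsHaarMeasure]
    (hU1 : μ (U : Set G) = 1) {ω : G → ℂ} (hcont : Continuous ω)
    {f : G → ℂ} (hf : IsHeckeFun U f) (g : G) :
    convFun μ f ω g = ∫ h, f h * (∫ u in (U : Set G), ω (h⁻¹ * u * g) ∂μ) ∂μ := by
  obtain ⟨hfc, hfbi⟩ := hf
  have hfcont : Continuous f := biinv_continuous hUopen hfbi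
  have hUm : MeasurableSet (U : Set G) := hUopen.measurableSet
  set K := tsupport f with hKdef
  have hKc : IsCompact K := hfc
  have hK0 : ∀ x, x ∉ K → f x = 0 := fun x hx => image_eq_zero_of_notMem_tsupport hx
  have step1 : ∀ u ∈ (U : Set G), (∫ h, f h * ω (h⁻¹ * u * g) ∂μ) = convFun μ f ω g := by
    intro u hu
    have hu' : u ∈ U := hu
    have hpt : ∀ h : G, f (u⁻¹ * h) * ω ((u⁻¹ * h)⁻¹ * g) = f h * ω (h⁻¹ * u * g) := by
      intro h
      have h1 : f (u⁻¹ * h) = f h := by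
        simpa using hfbi h u⁻¹ (inv_mem hu') 1 (one_mem U)
      have h2 : (u⁻¹ * h)⁻¹ * g = h⁻¹ * u * g := by group
      rw [h1, h2]
    calc (∫ h, f h * ω (h⁻¹ * u * g) ∂μ)
        = ∫ h, f (u⁻¹ * h) * ω ((u⁻¹ * h)⁻¹ * g) ∂μ := by simp only [hpt]
      _ = ∫ h, f h * ω (h⁻¹ * g) ∂μ :=
          integral_mul_left_eq_self (fun h => f h * ω (h⁻¹ * g)) u⁻¹
      _ = convFun μ f ω g := rfl
  have avg : convFun μ f ω g
      = ∫ u in (U : Set G), (∫ h, f h * ω (h⁻¹ * u * g) ∂μ) ∂μ := by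
    rw [setIntegral_congr_fun hUm (fun u hu => step1 u hu), setIntegral_const, measureReal_def, hU1]
    simp
  set χ : G → ℂ := (U : Set G).indicator (fun _ => (1:ℂ)) with hχdef
  have hχcont : Continuous χ := indicator_U_continuous hUopen
  have hχ1 : ∀ u ∈ (U : Set G), χ u = 1 := fun u hu => Set.indicator_of_mem hu _
  have hχ0 : ∀ u, u ∉ (U : Set G) → χ u = 0 := fun u hu => Set.indicator_of_notMem hu _
  have hFcont : Continuous (Function.uncurry
      (fun u h => χ u * (f h * ω (h⁻¹ * u * g)))) := by
    apply (hχcont.comp continuous_fst).mul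
    apply (hfcont.comp continuous_snd).mul
    exact hcont.comp (((continuous_snd.inv).mul continuous_fst).mul continuous_const)
  have hFsupp : HasCompactSupport (Function.uncurry
      (fun u h => χ u * (f h * ω (h⁻¹ * u * g)))) := by
    apply HasCompactSupport.intro (hUcomp.prod hKc)
    rintro ⟨u, h⟩ hp
    simp only [Set.mem_prod, not_and_or] at hp
    rcases hp with hp | hp
    · simp [Function.uncurry, hχ0 u hp]
    · simp [Function.uncurry, hK0 h hp]
  have hswap := integral_integral_swap_of_hasCompactSupport hFcont hFsupp (μ := μ) (ν := μ)
  rw [avg]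
  calc ∫ u in (U : Set G), (∫ h, f h * ω (h⁻¹ * u * g) ∂μ) ∂μ
      = ∫ u, χ u * (∫ h, f h * ω (h⁻¹ * u * g) ∂μ) ∂μ := by
        rw [← integral_indicator hUm]
        congr 1
        funext u
        by_cases hu : u ∈ (U : Set G)
        · rw [Set.indicator_of_mem hu, hχ1 u hu, one_mul]
        · rw [Set.indicator_of_notMem hu, hχ0 u hu, zero_mul]
    _ = ∫ u, (∫ h, χ u * (f h * ω (h⁻¹ * u * g)) ∂μ) ∂μ := by
        congr 1
        funext u
        rw [integral_const_mul]
    _ = ∫ h, (∫ u, χ u * (f h * ω (h⁻¹ * u * g)) ∂μ) ∂μ := hswap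
    _ = ∫ h, f h * (∫ u in (U : Set G), ω (h⁻¹ * u * g) ∂μ) ∂μ := by
        congr 1
        funext h
        rw [← integral_indicator hUm, ← integral_const_mul]
        congr 1
        funext u
        by_cases hu : u ∈ (U : Set G)
        · rw [Set.indicator_of_mem hu, hχ1 u hu, one_mul]
        · rw [Set.indicator_of_notMem hu, hχ0 u hu, zero_mul, mul_zero]

end AuxLemmas

/-- For a continuous `U`-biinvariant `ω` with `ω(e) = 1`, the spherical
functional equation holds if and only if `ω` is a common eigenfunction of the Hecke algebra
under convolution: for each `f ∈ ℋ(G,U)` there is `λ_f ∈ ℂ` with `f * ω = λ_f ω`. -/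
theorem spherical_functional_equation_iff_eigenfunction {G : Type*} [Group G]
    [TopologicalSpace G] [IsTopologicalGroup G] [LocallyCompactSpace G] [T2Space G]
    [MeasurableSpace G] [BorelSpace G]
    (U : Subgroup G) (hUcomp : IsCompact (U : Set G)) (hUopen : IsOpen (U : Set G))
    (μ : Measure G) [μ.IsHaarMeasure] [μ.IsMulRightInvariant] (hU1 : μ (U : Set G) = 1)
    (ω : G → ℂ) (hcont : Continuous ω) (hone : ω 1 = 1) (hbi : IsBiinvariant U ω) :
    (∀ g₁ g₂ : G, (∫ u in (U : Set G), ω (g₁ * u * g₂) ∂μ) = ω g₁ * ω g₂) ↔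
      ∀ f : G → ℂ, IsHeckeFun U f → ∃ lam : ℂ, convFun μ f ω = fun g => lam * ω g := by
  have hUm : MeasurableSet (U : Set G) := hUopen.measurableSet
  constructor
  · -- functional equation → eigenfunction
    intro hfe f hf
    refine ⟨∫ h, f h * ω h⁻¹ ∂μ, ?_⟩
    funext g
    show convFun μ f ω g = (∫ h, f h * ω h⁻¹ ∂μ) * ω g
    rw [conv_eq_average hUcomp hUopen μ hU1 hcont hf g]
    have hpt : ∀ h : G, f h * (∫ u in (U : Set G), ω (h⁻¹ * u * g) ∂μ)
        = (f h * ω h⁻¹) * ω g := by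
      intro h
      rw [hfe h⁻¹ g, mul_assoc]
    simp only [hpt]
    rw [integral_mul_const]
  · -- eigenfunction → functional equation
    intro heig g₁ g₂
    obtain ⟨S, hSdef⟩ : ∃ S : Set G, S = ((U : Set G) * ({g₁⁻¹} : Set G)) * (U : Set G) :=
      ⟨_, rfl⟩
    have hmemS : ∀ h : G, h ∈ S ↔ ∃ u₁ ∈ U, ∃ u₂ ∈ U, u₁ * g₁⁻¹ * u₂ = h := by
      intro h
      simp only [hSdef, Set.mem_mul, Set.mem_singleton_iff, SetLike.mem_coe]
      constructor
      · rintro ⟨x, ⟨u₁, hu₁, y, rfl, rfl⟩, u₂, hu₂, rfl⟩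
        exact ⟨u₁, hu₁, u₂, hu₂, rfl⟩
      · rintro ⟨u₁, hu₁, u₂, hu₂, rfl⟩
        exact ⟨u₁ * g₁⁻¹, ⟨u₁, hu₁, g₁⁻¹, rfl, rfl⟩, u₂, hu₂, rfl⟩
    have hScomp : IsCompact S := by
      rw [hSdef]; exact (hUcomp.mul isCompact_singleton).mul hUcomp
    have hSopen : IsOpen S := by rw [hSdef]; exact hUopen.mul_left
    have hSm : MeasurableSet S := hSopen.measurableSet
    have hsupp : HasCompactSupport (S.indicator (fun _ => (1:ℂ))) :=
      HasCompactSupport.intro hScomp (fun x hx => Set.indicator_of_notMem hx _)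
    have hbiS : IsBiinvariant U (S.indicator (fun _ => (1:ℂ))) := by
      intro g u₁ hu₁ u₂ hu₂
      have hiff : u₁ * g * u₂ ∈ S ↔ g ∈ S := by
        rw [hmemS, hmemS]
        constructor
        · rintro ⟨v₁, hv₁, v₂, hv₂, hv⟩
          refine ⟨u₁⁻¹ * v₁, mul_mem (inv_mem hu₁) hv₁, v₂ * u₂⁻¹,
            mul_mem hv₂ (inv_mem hu₂), ?_⟩
          have he : g = u₁⁻¹ * (u₁ * g * u₂) * u₂⁻¹ := by group
          rw [he, ← hv]
          group
        · rintro ⟨v₁, hv₁, v₂, hv₂, rfl⟩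
          exact ⟨u₁ * v₁, mul_mem hu₁ hv₁, v₂ * u₂, mul_mem hv₂ hu₂, by group⟩
      by_cases hg : g ∈ S
      · rw [Set.indicator_of_mem hg, Set.indicator_of_mem (hiff.mpr hg)]
      · rw [Set.indicator_of_notMem hg, Set.indicator_of_notMem (fun h => hg (hiff.mp h))]
    obtain ⟨lam, hlam⟩ := heig (S.indicator (fun _ => (1:ℂ))) ⟨hsupp, hbiS⟩
    have hval : ∀ g : G, lam * ω g
        = ((μ S).toReal : ℂ) * ∫ u in (U : Set G), ω (g₁ * u * g) ∂μ := by
      intro g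
      have h1 : convFun μ (S.indicator (fun _ => (1:ℂ))) ω g = lam * ω g := by
        rw [hlam]
      rw [conv_eq_average hUcomp hUopen μ hU1 hcont ⟨hsupp, hbiS⟩ g] at h1
      have h2 : ∀ h : G, S.indicator (fun _ => (1:ℂ)) h
          * (∫ u in (U : Set G), ω (h⁻¹ * u * g) ∂μ)
          = S.indicator (fun _ => (∫ u in (U : Set G), ω (g₁ * u * g) ∂μ)) h := by
        intro h
        by_cases hh : h ∈ S
        · rw [Set.indicator_of_mem hh, Set.indicator_of_mem hh, one_mul]
          obtain ⟨u₁, hu₁, u₂, hu₂, rfl⟩ := (hmemS h).1 hh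
          have e1 : ∀ u : G, ω ((u₁ * g₁⁻¹ * u₂)⁻¹ * u * g)
              = ω (g₁ * (u₁⁻¹ * u) * g) := by
            intro u
            have he : (u₁ * g₁⁻¹ * u₂)⁻¹ * u * g = u₂⁻¹ * (g₁ * (u₁⁻¹ * u) * g) * 1 := by
              group
            rw [he, hbi _ u₂⁻¹ (inv_mem hu₂) 1 (one_mem U)]
          calc ∫ u in (U : Set G), ω ((u₁ * g₁⁻¹ * u₂)⁻¹ * u * g) ∂μ
              = ∫ u in (U : Set G), ω (g₁ * (u₁⁻¹ * u) * g) ∂μ := by simp only [e1]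
            _ = ∫ u in (U : Set G), ω (g₁ * u * g) ∂μ :=
                setIntegral_U_mul_left hUopen μ (inv_mem hu₁) (fun v => ω (g₁ * v * g))
        · rw [Set.indicator_of_notMem hh, Set.indicator_of_notMem hh, zero_mul]
      rw [show (∫ h, S.indicator (fun _ => (1:ℂ)) h
            * (∫ u in (U : Set G), ω (h⁻¹ * u * g) ∂μ) ∂μ)
          = ∫ h, S.indicator (fun _ => (∫ u in (U : Set G), ω (g₁ * u * g) ∂μ)) h ∂μ
        from by simp only [h2]] at h1
      rw [integral_indicator_const _ hSm, measureReal_def] at h1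
      rw [← h1, Complex.real_smul]
    have hg1 : lam = ((μ S).toReal : ℂ) * ω g₁ := by
      have hv1 := hval 1
      rw [hone, mul_one] at hv1
      rw [hv1]
      congr 1
      calc ∫ u in (U : Set G), ω (g₁ * u * 1) ∂μ
          = ∫ u in (U : Set G), ω g₁ ∂μ := by
            refine setIntegral_congr_fun hUm (fun u hu => ?_)
            have he : g₁ * u * 1 = 1 * g₁ * u := by group
            rw [he, hbi g₁ 1 (one_mem U) u hu]
        _ = ω g₁ := by rw [setIntegral_const, measureReal_def, hU1]; simp
    have hc : ((μ S).toReal : ℂ) ≠ 0 := by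
      simp only [ne_eq, Complex.ofReal_eq_zero]
      refine ENNReal.toReal_ne_zero.mpr ⟨?_, hScomp.measure_lt_top.ne⟩
      refine (hSopen.measure_pos μ ⟨g₁⁻¹, ?_⟩).ne'
      exact (hmemS g₁⁻¹).2 ⟨1, one_mem U, 1, one_mem U, by group⟩
    have h2 := hval g₂
    rw [hg1] at h2
    have h3 : ((μ S).toReal : ℂ) * (∫ u in (U : Set G), ω (g₁ * u * g₂) ∂μ)
        = ((μ S).toReal : ℂ) * (ω g₁ * ω g₂) := by
      rw [← h2]; ring
    exact mul_left_cancel₀ hc h3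
end
end

section
/- Let (G,U) be a Gelfand pair and ω a *-spherical function for (G,U). Then ω is positive definite if and only if τ_ω(f^* * f) ≥ 0 for every compactly supported right-U-invariant function f : G → ℂ (i.e. f(gu) = f(g) for all g ∈ G, u ∈ U), where f^*(g) = conj(f(g⁻¹)), (f^* * f)(g) = ∫_G f^*(h) f(h⁻¹g) dμ(h) ∈ ℋ(G,U), and τ_ω(h) = ∫_G h(g) ω(g⁻¹) dμ(g). (This is the content, at the level of functions, of the equivalence between positive definiteness of bounded *-spherical functions and injectivity of the canonical surjection C*(L¹(G,U)) → p₀C*(G)p₀.) -/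
open MeasureTheory Complex ComplexOrder

noncomputable section

set_option linter.unusedSectionVars false
set_option linter.unusedVariables false

set_option linter.unusedSectionVars false
set_option linter.unusedVariables false
attribute [local instance] Classical.propDecidable

namespace GelfandAux

open scoped Pointwise

variable {G : Type*} [Group G] [TopologicalSpace G] [IsTopologicalGroup G]
  [T2Space G] [MeasurableSpace G] [BorelSpace G] (U : Subgroup G)

/-- indicator of the left coset `a • U`. -/
def chi (U : Subgroup G) (a : G) : G → ℂ := Set.indicator (a • (U : Set G)) 1

lemma mem_coset_iff {a g : G} : g ∈ a • (U : Set G) ↔ a⁻¹ * g ∈ U := by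
  rw [Set.mem_smul_set_iff_inv_smul_mem, smul_eq_mul, SetLike.mem_coe]

lemma chi_apply (a g : G) : chi U a g = if a⁻¹ * g ∈ U then 1 else 0 := by
  simp [chi, Set.indicator_apply, mem_coset_iff]

lemma chi_of_not_mem {a g : G} (h : g ∉ a • (U : Set G)) : chi U a g = 0 :=
  Set.indicator_of_notMem h _

lemma conj_chi (a g : G) : (starRingEnd ℂ) (chi U a g) = chi U a g := by
  rw [chi_apply]; split <;> simp

lemma chi_right (a g : G) {u : G} (hu : u ∈ U) : chi U a (g * u) = chi U a g := by
  rw [chi_apply, chi_apply]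
  refine if_congr ?_ rfl rfl
  rw [← mul_assoc]
  exact mul_mem_cancel_right hu

lemma chi_base (a x : G) : chi U a (a * x) = Set.indicator (U : Set G) 1 x := by
  unfold chi
  rw [Set.indicator_apply, Set.indicator_apply]
  refine if_congr ?_ rfl rfl
  rw [← smul_eq_mul]
  exact Set.smul_mem_smul_set_iff

lemma cont_of_rightInv (hUopen : IsOpen (U : Set G)) {F : G → ℂ}
    (h : ∀ g : G, ∀ u ∈ U, F (g * u) = F g) : Continuous F := by
  rw [continuous_iff_continuousAt]
  intro x
  have hx : x • (U : Set G) ∈ nhds x :=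
    (hUopen.smul x).mem_nhds (by rw [mem_coset_iff]; simpa using U.one_mem)
  have hev : F =ᶠ[nhds x] fun _ => F x := by
    refine Filter.eventually_of_mem hx fun y hy => ?_
    rw [mem_coset_iff U] at hy
    have := h x _ hy
    rwa [mul_inv_cancel_left] at this
  exact (continuousAt_congr hev).mpr continuousAt_const

lemma cont_chi (hUopen : IsOpen (U : Set G)) (a : G) : Continuous (chi U a) :=
  cont_of_rightInv U hUopen fun g u hu => chi_right U a g hu


section Measure

variable (hUcomp : IsCompact (U : Set G)) (hUopen : IsOpen (U : Set G))
  (μ : Measure G) [μ.IsHaarMeasure] [μ.IsMulRightInvariant]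

include hUcomp hUopen in
lemma integrable_term (a b g : G) :
    Integrable (fun h => chi U a h⁻¹ * chi U b (h⁻¹ * g)) μ := by
  apply Continuous.integrable_of_hasCompactSupport
  · exact ((cont_chi U hUopen a).comp continuous_inv).mul
      ((cont_chi U hUopen b).comp (continuous_inv.mul continuous_const))
  · apply HasCompactSupport.intro ((hUcomp.smul a).inv)
    intro x hx
    have hx' : x⁻¹ ∉ a • (U : Set G) := fun hm => hx (Set.mem_inv.mpr hm)
    rw [chi_of_not_mem U hx', zero_mul]

/-- The elementary convolution integrals. -/
def Ifun (μ : Measure G) (a b : G) : G → ℂ :=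
  fun g => ∫ h, chi U a h⁻¹ * chi U b (h⁻¹ * g) ∂μ

lemma Ifun_rightInv (a b : G) : ∀ g : G, ∀ u ∈ U, Ifun U μ a b (g * u) = Ifun U μ a b g := by
  intro g u hu
  unfold Ifun
  congr 1
  funext h
  rw [← mul_assoc, chi_right U b (h⁻¹ * g) hu]

include hUopen in
lemma Ifun_cont (a b : G) : Continuous (Ifun U μ a b) :=
  cont_of_rightInv U hUopen (Ifun_rightInv U μ a b)

lemma Ifun_vanish (a b : G) :
    ∀ g ∉ (a • (U : Set G))⁻¹ * (b • (U : Set G)), Ifun U μ a b g = 0 := by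
  intro g hg
  have hzero : ∀ h : G, chi U a h⁻¹ * chi U b (h⁻¹ * g) = 0 := by
    intro h
    by_cases h1 : h⁻¹ ∈ a • (U : Set G)
    · by_cases h2 : h⁻¹ * g ∈ b • (U : Set G)
      · exact absurd (by
          have := Set.mul_mem_mul (Set.mem_inv.mpr h1) h2
          rwa [mul_inv_cancel_left] at this) hg
      · rw [chi_of_not_mem U h2, mul_zero]
    · rw [chi_of_not_mem U h1, zero_mul]
  unfold Ifun
  rw [show (fun h : G => chi U a h⁻¹ * chi U b (h⁻¹ * g)) = fun _ => (0 : ℂ) from funext hzero,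
    integral_zero]

include hUcomp hUopen in
lemma Ifun_mul_integrable (a b : G) {ω : G → ℂ} (hωc : Continuous ω) :
    Integrable (fun g => Ifun U μ a b g * ω g⁻¹) μ := by
  apply Continuous.integrable_of_hasCompactSupport
  · exact (Ifun_cont U hUopen μ a b).mul (hωc.comp continuous_inv)
  · apply HasCompactSupport.intro (((hUcomp.smul a).inv).mul (hUcomp.smul b))
    intro x hx
    rw [Ifun_vanish U μ a b x hx, zero_mul]

include hUcomp hUopen in
/-- Key computation: the `τ_ω`-pairing of two elementary cosets. -/
lemma Ifun_tau (hU1 : μ (U : Set G) = 1) {ω : G → ℂ} (hωc : Continuous ω)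
    (hbi : IsBiinvariant U ω) (a b : G) :
    ∫ g, Ifun U μ a b g * ω g⁻¹ ∂μ = ω (b⁻¹ * a) := by
  have htoReal : (μ (U : Set G)).toReal = 1 := by rw [hU1]; simp
  have hVmeas : MeasurableSet (U : Set G) := hUopen.measurableSet
  -- step 1: put ω inside the inner integral
  have h1 : (fun g => Ifun U μ a b g * ω g⁻¹) =
      fun g => ∫ h, chi U a h⁻¹ * chi U b (h⁻¹ * g) * ω g⁻¹ ∂μ := by
    funext g
    exact (integral_mul_const _ _).symm
  rw [h1]
  -- step 2: Fubini swap
  have h2 : (∫ g, ∫ h, chi U a h⁻¹ * chi U b (h⁻¹ * g) * ω g⁻¹ ∂μ ∂μ)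
      = ∫ h, ∫ g, chi U a h⁻¹ * chi U b (h⁻¹ * g) * ω g⁻¹ ∂μ ∂μ := by
    apply integral_integral_swap_of_hasCompactSupport
    · have : Continuous fun p : G × G => chi U a p.2⁻¹ * chi U b (p.2⁻¹ * p.1) * ω p.1⁻¹ :=
        (((cont_chi U hUopen a).comp continuous_snd.inv).mul
          ((cont_chi U hUopen b).comp (continuous_snd.inv.mul continuous_fst))).mul
          (hωc.comp continuous_fst.inv)
      exact this
    · have hK : IsCompact ((((a • (U : Set G))⁻¹ * (b • (U : Set G)))) ×ˢ ((a • (U : Set G))⁻¹)) :=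
        (((hUcomp.smul a).inv).mul (hUcomp.smul b)).prod ((hUcomp.smul a).inv)
      apply HasCompactSupport.intro hK
      rintro ⟨g, h⟩ hp
      show chi U a h⁻¹ * chi U b (h⁻¹ * g) * ω g⁻¹ = 0
      by_cases h1m : h⁻¹ ∈ a • (U : Set G)
      · by_cases h2m : h⁻¹ * g ∈ b • (U : Set G)
        · exfalso
          apply hp
          refine Set.mem_prod.mpr ⟨?_, Set.mem_inv.mpr h1m⟩
          have := Set.mul_mem_mul (Set.mem_inv.mpr h1m) h2m
          rwa [mul_inv_cancel_left] at this
        · rw [chi_of_not_mem U h2m, mul_zero, zero_mul]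
      · rw [chi_of_not_mem U h1m, zero_mul, zero_mul]
  rw [h2]
  -- step 3: pull out the h-factor and evaluate the inner integral
  have h3 : ∀ h : G, (∫ g, chi U a h⁻¹ * chi U b (h⁻¹ * g) * ω g⁻¹ ∂μ)
      = chi U a h⁻¹ * ∫ x, Set.indicator (U : Set G) 1 x * ω (h * (b * x))⁻¹ ∂μ := by
    intro h
    have e1 : (fun g => chi U a h⁻¹ * chi U b (h⁻¹ * g) * ω g⁻¹)
        = fun g => chi U a h⁻¹ * (chi U b (h⁻¹ * g) * ω g⁻¹) := by
      funext g; rw [mul_assoc]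
    rw [e1, integral_const_mul]
    congr 1
    calc (∫ g, chi U b (h⁻¹ * g) * ω g⁻¹ ∂μ)
        = ∫ x, chi U b (h⁻¹ * (h * x)) * ω (h * x)⁻¹ ∂μ :=
          (integral_mul_left_eq_self (fun g => chi U b (h⁻¹ * g) * ω g⁻¹) h).symm
      _ = ∫ x, chi U b x * ω (h * x)⁻¹ ∂μ := by simp only [inv_mul_cancel_left]
      _ = ∫ x, chi U b (b * x) * ω (h * (b * x))⁻¹ ∂μ :=
          (integral_mul_left_eq_self (fun x => chi U b x * ω (h * x)⁻¹) b).symm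
      _ = ∫ x, Set.indicator (U : Set G) 1 x * ω (h * (b * x))⁻¹ ∂μ := by
          simp only [chi_base]
  rw [show (fun h => ∫ g, chi U a h⁻¹ * chi U b (h⁻¹ * g) * ω g⁻¹ ∂μ)
      = fun h => chi U a h⁻¹ * ∫ x, Set.indicator (U : Set G) 1 x * ω (h * (b * x))⁻¹ ∂μ
      from funext h3]
  -- step 4: substitute h → h * a⁻¹
  rw [← integral_mul_right_eq_self
    (fun h => chi U a h⁻¹ * ∫ x, Set.indicator (U : Set G) 1 x * ω (h * (b * x))⁻¹ ∂μ) a⁻¹]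
  -- step 5: pointwise evaluation
  have h5 : ∀ h : G,
      chi U a (h * a⁻¹)⁻¹ * (∫ x, Set.indicator (U : Set G) 1 x * ω ((h * a⁻¹) * (b * x))⁻¹ ∂μ)
      = Set.indicator (U : Set G) (fun _ => (μ (U : Set G)).toReal • ω (b⁻¹ * a)) h := by
    intro h
    have harg : chi U a (h * a⁻¹)⁻¹ = Set.indicator (U : Set G) 1 h := by
      have : (h * a⁻¹)⁻¹ = a * h⁻¹ := by group
      rw [this, chi_base]
      rw [Set.indicator_apply, Set.indicator_apply]
      refine if_congr ?_ rfl rfl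
      simp only [SetLike.mem_coe]
      exact U.inv_mem_iff
    rw [harg]
    by_cases hh : h ∈ (U : Set G)
    · have hinner : (fun x => Set.indicator (U : Set G) 1 x * ω ((h * a⁻¹) * (b * x))⁻¹)
          = Set.indicator (U : Set G) (fun _ => ω (b⁻¹ * a)) := by
        funext x
        by_cases hx : x ∈ (U : Set G)
        · rw [Set.indicator_of_mem hx, Set.indicator_of_mem hx, Pi.one_apply, one_mul]
          have harg2 : ((h * a⁻¹) * (b * x))⁻¹ = x⁻¹ * (b⁻¹ * a) * h⁻¹ := by group
          rw [harg2]
          exact hbi (b⁻¹ * a) x⁻¹ (U.inv_mem_iff.mpr hx) h⁻¹ (U.inv_mem_iff.mpr hh)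
        · rw [Set.indicator_of_notMem hx, Set.indicator_of_notMem hx, zero_mul]
      rw [hinner, integral_indicator_const _ hVmeas,
        Set.indicator_of_mem hh, Set.indicator_of_mem hh, Pi.one_apply, one_mul, Measure.real_def]
    · rw [Set.indicator_of_notMem hh, Set.indicator_of_notMem hh, zero_mul]
  rw [show (fun h => chi U a (h * a⁻¹)⁻¹ *
        ∫ x, Set.indicator (U : Set G) 1 x * ω ((h * a⁻¹) * (b * x))⁻¹ ∂μ)
      = Set.indicator (U : Set G) (fun _ => (μ (U : Set G)).toReal • ω (b⁻¹ * a))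
      from funext h5]
  rw [integral_indicator_const _ hVmeas, Measure.real_def, htoReal, one_smul, one_smul]


include hUcomp hUopen in
lemma tau_eval (hU1 : μ (U : Set G) = 1) {ω : G → ℂ} (hωc : Continuous ω)
    (hbi : IsBiinvariant U ω) (m : ℕ) (s : Fin m → G) (z : Fin m → ℂ)
    (f : G → ℂ) (hfeq : f = fun g => ∑ k, z k * chi U (s k) g) :
    tauOmega μ ω (convFun μ (starFun f) f) =
      ∑ j, ∑ k, (starRingEnd ℂ) (z j) * z k * ω ((s k)⁻¹ * s j) := by
  subst hfeq
  have hstarf : ∀ h : G, starFun (fun g => ∑ k, z k * chi U (s k) g) h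
      = ∑ j, (starRingEnd ℂ) (z j) * chi U (s j) h⁻¹ := by
    intro h
    simp only [starFun, map_sum, map_mul, conj_chi]
  have hconv : ∀ g : G, convFun μ (starFun fun g => ∑ k, z k * chi U (s k) g)
      (fun g => ∑ k, z k * chi U (s k) g) g
      = ∑ j, ∑ k, (starRingEnd ℂ) (z j) * z k * Ifun U μ (s j) (s k) g := by
    intro g
    show (∫ h, starFun (fun g => ∑ k, z k * chi U (s k) g) h *
        (∑ k, z k * chi U (s k) (h⁻¹ * g)) ∂μ) = _
    have e1 : (fun h => starFun (fun g => ∑ k, z k * chi U (s k) g) h *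
          (∑ k, z k * chi U (s k) (h⁻¹ * g)))
        = fun h => ∑ j, ∑ k, (starRingEnd ℂ) (z j) * z k *
            (chi U (s j) h⁻¹ * chi U (s k) (h⁻¹ * g)) := by
      funext h
      rw [hstarf h, Finset.sum_mul_sum]
      refine Finset.sum_congr rfl fun j _ => Finset.sum_congr rfl fun k _ => by ring
    rw [e1]
    rw [integral_finset_sum _ fun j _ => integrable_finset_sum _ fun k _ =>
      ((integrable_term U hUcomp hUopen μ (s j) (s k) g).const_mul _)]
    refine Finset.sum_congr rfl fun j _ => ?_
    rw [integral_finset_sum _ fun k _ =>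
      ((integrable_term U hUcomp hUopen μ (s j) (s k) g).const_mul _)]
    refine Finset.sum_congr rfl fun k _ => ?_
    rw [integral_const_mul]
    rfl
  unfold tauOmega
  rw [show (fun g => convFun μ (starFun fun g => ∑ k, z k * chi U (s k) g)
        (fun g => ∑ k, z k * chi U (s k) g) g * ω g⁻¹)
      = fun g => ∑ j, ∑ k, (starRingEnd ℂ) (z j) * z k * (Ifun U μ (s j) (s k) g * ω g⁻¹) from by
    funext g
    rw [hconv g, Finset.sum_mul]
    refine Finset.sum_congr rfl fun j _ => ?_
    rw [Finset.sum_mul]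
    exact Finset.sum_congr rfl fun k _ => by ring]
  rw [integral_finset_sum _ fun j _ => integrable_finset_sum _ fun k _ =>
    ((Ifun_mul_integrable U hUcomp hUopen μ (s j) (s k) hωc).const_mul _)]
  refine Finset.sum_congr rfl fun j _ => ?_
  rw [integral_finset_sum _ fun k _ =>
    ((Ifun_mul_integrable U hUcomp hUopen μ (s j) (s k) hωc).const_mul _)]
  refine Finset.sum_congr rfl fun k _ => ?_
  rw [integral_const_mul, Ifun_tau U hUcomp hUopen μ hU1 hωc hbi (s j) (s k)]

end Measure

lemma exists_rep (hUopen : IsOpen (U : Set G)) {f : G → ℂ} (hf : HasCompactSupport f)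
    (hinv : ∀ g : G, ∀ u ∈ U, f (g * u) = f g) :
    ∃ (m : ℕ) (s : Fin m → G) (z : Fin m → ℂ),
      f = fun g => ∑ k, z k * chi U (s k) g := by
  classical
  obtain ⟨t, ht⟩ := hf.elim_finite_subcover (fun g : G => g • (U : Set G))
    (fun g => hUopen.smul g)
    (fun x _ => Set.mem_iUnion.mpr ⟨x, by rw [mem_coset_iff]; simpa using U.one_mem⟩)
  let Q : Finset (G ⧸ U) := t.image (QuotientGroup.mk)
  let e : {q // q ∈ Q} ≃ Fin Q.card := Q.equivFin
  refine ⟨Q.card, fun i => ((e.symm i : {q // q ∈ Q}) : G ⧸ U).out,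
    fun i => f (((e.symm i : {q // q ∈ Q}) : G ⧸ U).out), ?_⟩
  funext g
  have key : ∀ q : G ⧸ U, f q.out * chi U q.out g
      = if (q : G ⧸ U) = QuotientGroup.mk g then f g else 0 := by
    intro q
    rw [chi_apply]
    by_cases hq : (q : G ⧸ U) = QuotientGroup.mk g
    · have hmem : q.out⁻¹ * g ∈ U := by
        apply QuotientGroup.eq.mp
        rw [QuotientGroup.out_eq', hq]
      rw [if_pos hq, if_pos hmem, mul_one]
      have := hinv q.out _ hmem
      rw [mul_inv_cancel_left] at this
      exact this.symm
    · rw [if_neg hq, if_neg, mul_zero]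
      intro hmem
      exact hq (by rw [← QuotientGroup.out_eq' q]; exact QuotientGroup.eq.mpr hmem)
  have hsum : (∑ i : Fin Q.card, f (((e.symm i : {q // q ∈ Q}) : G ⧸ U)).out *
        chi U (((e.symm i : {q // q ∈ Q}) : G ⧸ U)).out g)
      = ∑ q : {q // q ∈ Q}, f ((q : G ⧸ U)).out * chi U ((q : G ⧸ U)).out g :=
    Equiv.sum_comp e.symm (fun q : {q // q ∈ Q} => f ((q : G ⧸ U)).out * chi U ((q : G ⧸ U)).out g)
  rw [hsum]
  have hsum2 : (∑ q : {q // q ∈ Q}, f ((q : G ⧸ U)).out * chi U ((q : G ⧸ U)).out g)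
      = ∑ q ∈ Q, f q.out * chi U q.out g :=
    Finset.sum_coe_sort Q (fun q => f q.out * chi U q.out g)
  rw [hsum2]
  have hsum3 : (∑ q ∈ Q, f q.out * chi U q.out g)
      = ∑ q ∈ Q, if q = QuotientGroup.mk g then f g else 0 :=
    Finset.sum_congr rfl fun q _ => key q
  rw [hsum3, Finset.sum_ite_eq' Q (QuotientGroup.mk g) (fun _ => f g)]
  by_cases hmem : (QuotientGroup.mk g : G ⧸ U) ∈ Q
  · rw [if_pos hmem]
  · rw [if_neg hmem]
    by_contra hne
    have hg : g ∈ tsupport f := subset_tsupport f (by simpa using hne)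
    obtain ⟨a, ha⟩ := Set.mem_iUnion.mp (ht hg)
    obtain ⟨hat, hga⟩ := Set.mem_iUnion.mp ha
    apply hmem
    refine Finset.mem_image.mpr ⟨a, hat, ?_⟩
    rw [mem_coset_iff] at hga
    exact (QuotientGroup.eq.mpr hga).symm ▸ rfl


end GelfandAux

/-- For a Gelfand pair `(G,U)` and a `*`-spherical function `ω`, `ω` is
positive definite if and only if `τ_ω(f^* * f) ≥ 0` for every compactly supported
right-`U`-invariant function `f : G → ℂ`. -/
theorem posDef_iff_tauOmega_nonneg {G : Type*} [Group G] [TopologicalSpace G]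
    [IsTopologicalGroup G] [LocallyCompactSpace G] [T2Space G] [MeasurableSpace G] [BorelSpace G]
    (U : Subgroup G) (hUcomp : IsCompact (U : Set G)) (hUopen : IsOpen (U : Set G))
    (μ : Measure G) [μ.IsHaarMeasure] [μ.IsMulRightInvariant] (hU1 : μ (U : Set G) = 1)
    (hGelfand : IsGelfandPair μ U) (ω : G → ℂ) (hω : IsSpherical μ U ω)
    (hstar : ∀ g : G, ω g⁻¹ = (starRingEnd ℂ) (ω g)) :
    IsPosDefFun ω ↔
      ∀ f : G → ℂ, HasCompactSupport f → (∀ (g : G), ∀ u ∈ U, f (g * u) = f g) →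
        0 ≤ tauOmega μ ω (convFun μ (starFun f) f) := by
  obtain ⟨hωc, hω1, hbi, hsph⟩ := hω
  constructor
  · intro hpd f hf hfinv
    obtain ⟨m, s, z, hfeq⟩ := GelfandAux.exists_rep U hUopen hf hfinv
    rw [GelfandAux.tau_eval U hUcomp hUopen μ hU1 hωc hbi m s z f hfeq]
    refine le_of_le_of_eq (hpd m s fun j => (starRingEnd ℂ) (z j)) ?_
    rw [Finset.sum_comm]
    refine Finset.sum_congr rfl fun k _ => Finset.sum_congr rfl fun j _ => ?_
    simp only [Complex.conj_conj]
    ring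
  · intro htau m s z
    set f : G → ℂ := fun g => ∑ k, (starRingEnd ℂ) (z k) * GelfandAux.chi U (s k) g with hfdef
    have hfc : HasCompactSupport f := by
      apply HasCompactSupport.intro (isCompact_iUnion fun k : Fin m => hUcomp.smul (s k))
      intro x hx
      have hzero : ∀ k : Fin m, GelfandAux.chi U (s k) x = 0 := fun k =>
        GelfandAux.chi_of_not_mem U fun hm => hx (Set.mem_iUnion.mpr ⟨k, hm⟩)
      simp [hfdef, hzero]
    have hfinv : ∀ g : G, ∀ u ∈ U, f (g * u) = f g := by
      intro g u hu
      simp only [hfdef]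
      exact Finset.sum_congr rfl fun k _ => by rw [GelfandAux.chi_right U (s k) g hu]
    have h0 := htau f hfc hfinv
    rw [GelfandAux.tau_eval U hUcomp hUopen μ hU1 hωc hbi m s
      (fun k => (starRingEnd ℂ) (z k)) f hfdef] at h0
    refine le_of_le_of_eq h0 ?_
    rw [Finset.sum_comm]
    refine Finset.sum_congr rfl fun k _ => Finset.sum_congr rfl fun j _ => ?_
    simp only [Complex.conj_conj]
    ring


end
end

section
/- Let 𝒢 be a topological group and N ⊆ 𝒢 a closed normal subgroup. Then the pair (𝒢, N) has property (T) if and only if the quotient group 𝒢/N has property (T). -/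
noncomputable section

/-- A pair `(𝒢, ℋ)` consisting of a topological group `𝒢` and a subgroup `ℋ` has
*property (T)* if every unitary representation of `𝒢` (a strongly continuous homomorphism
into the unitary group of a complex Hilbert space) that has `ℋ`-invariant almost
`𝒢`-invariant vectors — i.e. for each `ε > 0` and each compact `Q ⊆ 𝒢/ℋ` there is an
`ℋ`-invariant unit vector `ξ` with `‖π(g)ξ - ξ‖ < ε` for all `g` with `gℋ ∈ Q` — has a
nonzero `𝒢`-invariant vector. -/
def HasPropertyTPair (G : Type*) [Group G] [TopologicalSpace G] (H : Subgroup G) : Prop :=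
  ∀ (E : Type) (_ : NormedAddCommGroup E) (_ : InnerProductSpace ℂ E) (_ : CompleteSpace E)
    (π : G →* (E ≃ₗᵢ[ℂ] E)),
    (∀ ξ : E, Continuous fun g : G => π g ξ) →
    (∀ ε : ℝ, 0 < ε → ∀ Q : Set (G ⧸ H), IsCompact Q →
      ∃ ξ : E, ‖ξ‖ = 1 ∧ (∀ h ∈ H, π h ξ = ξ) ∧
        ∀ g : G, (QuotientGroup.mk g : G ⧸ H) ∈ Q → ‖π g ξ - ξ‖ < ε) →
    ∃ ξ : E, ξ ≠ 0 ∧ ∀ g : G, π g ξ = ξ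

section Aux

variable {G : Type*} [Group G] {E : Type} [NormedAddCommGroup E] [InnerProductSpace ℂ E]
  (π : G →* (E ≃ₗᵢ[ℂ] E)) (N : Subgroup G) [N.Normal]

lemma pi_mul_apply (a b : G) (y : E) : π a (π b y) = π (a * b) y := by
  rw [map_mul]; rfl

/-- The subspace of `N`-invariant vectors. -/
def invSub : Submodule ℂ E where
  carrier := {x | ∀ h ∈ N, π h x = x}
  zero_mem' := fun h _ => map_zero (π h)
  add_mem' := fun {a b} ha hb h hh => by
    rw [map_add, ha h hh, hb h hh]
  smul_mem' := fun c x hx h hh => by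
    rw [map_smul, hx h hh]

lemma mapsTo_invSub (g : G) {x : E} (hx : x ∈ invSub π N) : π g x ∈ invSub π N := by
  intro h hh
  have hn : g⁻¹ * h * g ∈ N := Subgroup.Normal.conj_mem' ‹N.Normal› h hh g
  have key : h * g = g * (g⁻¹ * h * g) := by group
  calc π h (π g x) = π (h * g) x := pi_mul_apply π h g x
    _ = π (g * (g⁻¹ * h * g)) x := by rw [key]
    _ = π g (π (g⁻¹ * h * g) x) := (pi_mul_apply π g _ x).symm
    _ = π g x := by rw [hx _ hn]

/-- The restriction of `π g` to the invariant subspace, as a linear equivalence. -/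
def restrictLE (g : G) : (invSub π N) ≃ₗ[ℂ] (invSub π N) where
  toFun x := ⟨π g x, mapsTo_invSub π N g x.2⟩
  invFun x := ⟨π g⁻¹ x, mapsTo_invSub π N g⁻¹ x.2⟩
  left_inv x := Subtype.ext (by
    show π g⁻¹ (π g x) = x
    rw [pi_mul_apply, inv_mul_cancel, map_one]; rfl)
  right_inv x := Subtype.ext (by
    show π g (π g⁻¹ x) = x
    rw [pi_mul_apply, mul_inv_cancel, map_one]; rfl)
  map_add' x y := Subtype.ext (by
    show π g (↑x + ↑y) = π g ↑x + π g ↑y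
    exact map_add _ _ _)
  map_smul' c x := Subtype.ext (by
    show π g (c • (x : E)) = c • π g ↑x
    exact map_smul _ _ _)

/-- The restriction of `π g` to the invariant subspace, as a linear isometry equivalence. -/
def restrictEquiv (g : G) : (invSub π N) ≃ₗᵢ[ℂ] (invSub π N) :=
  ⟨restrictLE π N g, fun x => by
    show ‖(⟨π g x, _⟩ : invSub π N)‖ = ‖x‖
    have : ‖(⟨π g x, mapsTo_invSub π N g x.2⟩ : invSub π N)‖ = ‖π g (x : E)‖ := rfl
    rw [this, (π g).norm_map]
    rfl⟩

/-- The restriction of `π` to the invariant subspace, as a homomorphism. -/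
def restrictRep : G →* ((invSub π N) ≃ₗᵢ[ℂ] (invSub π N)) where
  toFun := restrictEquiv π N
  map_one' := by
    ext x
    show π 1 x.1 = x.1
    rw [map_one]; rfl
  map_mul' a b := by
    ext x
    exact (pi_mul_apply π a b x.1).symm

end Aux

/-- For a closed normal subgroup `N` of a topological group `𝒢`, the pair
`(𝒢, N)` has property (T) if and only if the quotient group `𝒢/N` has property (T) (i.e.
the pair `(𝒢/N, {e})` has property (T)). -/
theorem hasPropertyTPair_normal_iff_quotient_T {G : Type*} [Group G] [TopologicalSpace G]
    [IsTopologicalGroup G] (N : Subgroup G) [N.Normal] (hNclosed : IsClosed (N : Set G)) :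
    HasPropertyTPair G N ↔ HasPropertyTPair (G ⧸ N) (⊥ : Subgroup (G ⧸ N)) := by
  constructor
  · -- (G, N) has T → G⧸N has T
    intro hT E iE1 iE2 iE3 σ hcont halmost
    set π : G →* (E ≃ₗᵢ[ℂ] E) := σ.comp (QuotientGroup.mk' N) with hπ
    have key := hT E iE1 iE2 iE3 π
      (fun ξ => (hcont ξ).comp QuotientGroup.continuous_mk)
      ?_
    · obtain ⟨ξ, hξ0, hξinv⟩ := key
      refine ⟨ξ, hξ0, fun x => ?_⟩
      obtain ⟨g, rfl⟩ := QuotientGroup.mk_surjective x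
      exact hξinv g
    · intro ε hε Q hQ
      obtain ⟨ξ, h1, _, h3⟩ := halmost ε hε (QuotientGroup.mk '' Q)
        (hQ.image QuotientGroup.continuous_mk)
      refine ⟨ξ, h1, fun h hh => ?_, fun g hg => h3 (QuotientGroup.mk g) ⟨_, hg, rfl⟩⟩
      have : (QuotientGroup.mk h : G ⧸ N) = 1 := (QuotientGroup.eq_one_iff h).mpr hh
      show σ (QuotientGroup.mk h) ξ = ξ
      rw [this, map_one]; rfl
  · -- G⧸N has T → (G, N) has T
    intro hTq E iE1 iE2 iE3 π hcont halmost
    set F := invSub π N with hF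
    have hFclosed : IsClosed (F : Set E) := by
      have : (F : Set E) = ⋂ h ∈ N, {x | π h x = x} := by
        ext x; simp [hF, invSub, Set.mem_iInter]
      rw [this]
      exact isClosed_biInter fun h _ => isClosed_eq (π h).continuous continuous_id
    haveI : CompleteSpace F := hFclosed.completeSpace_coe
    set σ₀ := restrictRep π N with hσ₀
    have hker : N ≤ σ₀.ker := by
      intro h hh
      rw [MonoidHom.mem_ker]
      ext x
      exact x.2 h hh
    set σ : G ⧸ N →* (F ≃ₗᵢ[ℂ] F) := QuotientGroup.lift N σ₀ hker with hσ
    have hσmk : ∀ g : G, σ (QuotientGroup.mk g) = σ₀ g := fun g => rfl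
    -- the homeomorphism (G⧸N) ≃ₜ (G⧸N)⧸⊥
    have hbij : Function.Bijective
        (QuotientGroup.mk : (G ⧸ N) → (G ⧸ N) ⧸ (⊥ : Subgroup (G ⧸ N))) := by
      constructor
      · intro a b hab
        have := (QuotientGroup.eq ).mp hab
        rw [Subgroup.mem_bot] at this
        exact inv_mul_eq_one.mp this
      · exact QuotientGroup.mk_surjective
    let e : (G ⧸ N) ≃ₜ ((G ⧸ N) ⧸ (⊥ : Subgroup (G ⧸ N))) :=
      Equiv.toHomeomorphOfContinuousOpen (Equiv.ofBijective _ hbij)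
        QuotientGroup.continuous_mk QuotientGroup.isOpenMap_coe
    have key := hTq F inferInstance inferInstance inferInstance σ ?_ ?_
    · obtain ⟨η, hη0, hηinv⟩ := key
      refine ⟨(η : E), fun h0 => hη0 (Subtype.ext h0), fun g => ?_⟩
      have := hηinv (QuotientGroup.mk g)
      exact congrArg Subtype.val this
    · -- continuity
      intro ξ
      rw [(QuotientGroup.isQuotientMap_mk N).continuous_iff]
      exact Continuous.subtype_mk (hcont (ξ : E)) _
    · -- almost invariant vectors
      intro ε hε Q' hQ'
      have hQ : IsCompact ((⇑e) ⁻¹' Q') := e.isCompact_preimage.mpr hQ'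
      obtain ⟨ξ, h1, h2, h3⟩ := halmost ε hε ((⇑e) ⁻¹' Q') hQ
      refine ⟨⟨ξ, h2⟩, h1, fun h hh => ?_, fun x hx => ?_⟩
      · rw [Subgroup.mem_bot] at hh
        rw [hh, map_one]; rfl
      · obtain ⟨g, rfl⟩ := QuotientGroup.mk_surjective x
        have hg : (QuotientGroup.mk g : G ⧸ N) ∈ (⇑e) ⁻¹' Q' := hx
        have := h3 g hg
        calc ‖σ (QuotientGroup.mk g) ⟨ξ, h2⟩ - ⟨ξ, h2⟩‖
            = ‖π g ξ - ξ‖ := rfl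
          _ < ε := this
end
end

section
/- Let 𝒢 be a topological group and H ⊆ 𝒢 a compact subgroup. Then 𝒢 has property (T) if and only if the pair (𝒢, H) has property (T). -/
noncomputable section

open Set

section Aux

variable {G : Type*} [Group G] [TopologicalSpace G] [IsTopologicalGroup G]

/-- The quotient map `G → G ⧸ H` is proper when `H` is compact; in particular preimages of
compact sets are compact. -/
lemma isCompact_preimage_quotientGroup_mk (H : Subgroup G) (hH : IsCompact (H : Set G))
    {Q : Set (G ⧸ H)} (hQ : IsCompact Q) :
    IsCompact ((QuotientGroup.mk : G → G ⧸ H) ⁻¹' Q) := by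
  have hproper : IsProperMap (QuotientGroup.mk : G → G ⧸ H) := by
    rw [isProperMap_iff_isClosedMap_and_compact_fibers]
    refine ⟨QuotientGroup.continuous_mk, QuotientGroup.isClosedMap_coe hH, fun y => ?_⟩
    obtain ⟨g, rfl⟩ := QuotientGroup.mk_surjective y
    have hset : (QuotientGroup.mk : G → G ⧸ H) ⁻¹' {QuotientGroup.mk g}
        = (fun h => g * h) '' (H : Set G) := by
      ext x
      simp only [Set.mem_preimage, Set.mem_singleton_iff, Set.mem_image, SetLike.mem_coe]
      constructor
      · intro hx
        refine ⟨g⁻¹ * x, ?_, by group⟩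
        have := (QuotientGroup.eq (s := H)).mp hx.symm
        exact this
      · rintro ⟨h, hh, rfl⟩
        exact (QuotientGroup.eq (s := H)).mpr (by simpa using hh) |>.symm
    rw [hset]
    exact hH.image (continuous_mul_left g)
  exact hproper.isCompact_preimage hQ

/-- Uniqueness of the minimal norm point of a convex set in an inner product space. -/
lemma min_norm_unique {E : Type*} [NormedAddCommGroup E] [InnerProductSpace ℝ E]
    {K : Set E} (hK : Convex ℝ K) {v w : E} (hv : v ∈ K) (hw : w ∈ K)
    (hvn : ‖v‖ = ⨅ x : K, ‖(x : E)‖) (hwn : ‖w‖ = ⨅ x : K, ‖(x : E)‖) : v = w := by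
  have hKne : K.Nonempty := ⟨v, hv⟩
  haveI : Nonempty K := hKne.to_subtype
  set d : ℝ := ⨅ x : K, ‖(x : E)‖ with hd
  have hmid : (1/2 : ℝ) • v + (1/2 : ℝ) • w ∈ K :=
    hK hv hw (by norm_num) (by norm_num) (by norm_num)
  have hdle : d ≤ ‖(1/2 : ℝ) • v + (1/2 : ℝ) • w‖ :=
    ciInf_le ⟨0, Set.forall_mem_range.2 fun _ => norm_nonneg _⟩
      (⟨_, hmid⟩ : K)
  have hmidnorm : ‖(1/2 : ℝ) • v + (1/2 : ℝ) • w‖ = (1/2 : ℝ) * ‖v + w‖ := by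
    rw [← smul_add, norm_smul]
    simp
  have hpar := parallelogram_law_with_norm ℝ v w
  have hsum : 2 * d ≤ ‖v + w‖ := by
    rw [hmidnorm] at hdle; linarith
  have h0 : 0 ≤ d := hvn ▸ norm_nonneg v
  have hsq : ‖v - w‖ * ‖v - w‖ ≤ 0 := by nlinarith
  have hvw : ‖v - w‖ = 0 :=
    le_antisymm (by nlinarith [norm_nonneg (v - w)]) (norm_nonneg _)
  exact sub_eq_zero.mp (norm_eq_zero.mp hvw)

end Aux

set_option maxHeartbeats 1000000 in
/-- For a compact subgroup `H` of a topological group `𝒢`, the group `𝒢`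
has property (T) (i.e. the pair `(𝒢, {e})` has property (T)) if and only if the pair
`(𝒢, H)` has property (T). -/
theorem group_T_iff_hasPropertyTPair_compact {G : Type*} [Group G] [TopologicalSpace G]
    [IsTopologicalGroup G] (H : Subgroup G) (hHcompact : IsCompact (H : Set G)) :
    HasPropertyTPair G (⊥ : Subgroup G) ↔ HasPropertyTPair G H := by
  constructor
  · -- easy direction: property (T) for `(G, ⊥)` implies it for `(G, H)`.
    intro hT E i1 i2 i3 π hcont hyp
    letI := i1; letI := i2; letI := i3
    apply hT E i1 i2 i3 π hcont
    intro ε hε Q hQ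
    -- the natural map `G ⧸ ⊥ → G ⧸ H`
    set φ : G ⧸ (⊥ : Subgroup G) → G ⧸ H := fun x =>
      Quotient.liftOn' x (fun g => (QuotientGroup.mk g : G ⧸ H)) (fun a b hab => by
        have : a⁻¹ * b ∈ (⊥ : Subgroup G) := QuotientGroup.leftRel_apply.mp hab
        have hab' : a = b := inv_mul_eq_one.mp (Subgroup.mem_bot.mp this)
        rw [hab']) with hφ
    have hφmk : ∀ g : G, φ (QuotientGroup.mk g) = (QuotientGroup.mk g : G ⧸ H) := fun g => rfl
    have hφcont : Continuous φ := by
      rw [(QuotientGroup.isQuotientMap_mk (⊥ : Subgroup G)).continuous_iff]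
      exact QuotientGroup.continuous_mk
    obtain ⟨ξ, hξ1, hξH, hξb⟩ := hyp ε hε (φ '' Q) (hQ.image hφcont)
    refine ⟨ξ, hξ1, ?_, ?_⟩
    · intro h hh
      have : h = 1 := Subgroup.mem_bot.mp hh
      subst this
      simp
    · intro g hg
      exact hξb g ⟨QuotientGroup.mk g, hg, hφmk g⟩
  · -- hard direction: property (T) for `(G, H)` implies it for `(G, ⊥)`.
    intro hT E i1 i2 i3 π hcont hyp
    letI := i1; letI := i2; letI := i3
    letI : InnerProductSpace ℝ E := InnerProductSpace.complexToReal
    apply hT E i1 i2 i3 π hcont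
    intro ε hε Q hQ
    -- choose a small δ
    set δ : ℝ := min (ε / 7) (1 / 2) with hδdef
    have hδpos : 0 < δ := lt_min (by linarith) (by norm_num)
    have hδε : δ ≤ ε / 7 := min_le_left _ _
    have hδhalf : δ ≤ 1 / 2 := min_le_right _ _
    -- the compact set in `G` : the preimage of `Q` together with `H`
    set Qpre : Set G := (QuotientGroup.mk : G → G ⧸ H) ⁻¹' Q ∪ (H : Set G) with hQpre
    have hQpreC : IsCompact Qpre :=
      (isCompact_preimage_quotientGroup_mk H hHcompact hQ).union hHcompact
    -- its image in `G ⧸ ⊥`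
    have hQ0C : IsCompact ((QuotientGroup.mk : G → G ⧸ (⊥ : Subgroup G)) '' Qpre) :=
      hQpreC.image QuotientGroup.continuous_mk
    obtain ⟨ξ, hξ1, -, hξb⟩ := hyp δ hδpos _ hQ0C
    have hmkinj : Function.Injective (QuotientGroup.mk : G → G ⧸ (⊥ : Subgroup G)) := by
      intro a b hab
      have := (QuotientGroup.eq (s := (⊥ : Subgroup G))).mp hab
      exact inv_mul_eq_one.mp (Subgroup.mem_bot.mp this)
    have hbound : ∀ g ∈ Qpre, ‖π g ξ - ξ‖ < δ := fun g hg => hξb g ⟨g, hg, rfl⟩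
    -- the orbit of ξ under H, and its closed convex hull
    set S : Set E := (fun h : G => π h ξ) '' (H : Set G) with hS
    set C : Set E := closure (convexHull ℝ S) with hC
    have hSsubC : S ⊆ C := (subset_convexHull ℝ S).trans subset_closure
    have hCne : C.Nonempty := ⟨π 1 ξ, hSsubC ⟨1, H.one_mem, rfl⟩⟩
    have hCconv : Convex ℝ C := (convex_convexHull ℝ S).closure
    have hCcomplete : IsComplete C := isClosed_closure.isComplete
    -- C is contained in the closed δ-ball around ξ
    have hball : C ⊆ Metric.closedBall ξ δ := by
      apply closure_minimal _ Metric.isClosed_closedBall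
      apply convexHull_min _ (convex_closedBall ξ δ)
      rintro x ⟨h, hh, rfl⟩
      rw [Metric.mem_closedBall, dist_eq_norm]
      exact (hbound h (Or.inr hh)).le
    -- the minimal norm point of C
    obtain ⟨c, hcC, hcmin⟩ :=
      exists_norm_eq_iInf_of_complete_convex hCne hCcomplete hCconv 0
    simp only [zero_sub, norm_neg] at hcmin
    -- C is invariant under π h for h ∈ H
    have hCinv : ∀ h ∈ H, ∀ x ∈ C, π h x ∈ C := by
      intro h hh x hx
      set f : E →ₗ[ℝ] E := ((π h).toLinearEquiv.toLinearMap).restrictScalars ℝ with hf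
      have hfx : ∀ y : E, f y = π h y := fun y => rfl
      have h1 : π h x ∈ f '' C := ⟨x, hx, rfl⟩
      have h2 : f '' C ⊆ closure (f '' convexHull ℝ S) :=
        image_closure_subset_closure_image (π h).continuous
      have h3 : f '' convexHull ℝ S = convexHull ℝ (f '' S) := f.image_convexHull S
      have h4 : f '' S ⊆ S := by
        rintro y ⟨x', ⟨h', hh', rfl⟩, rfl⟩
        refine ⟨h * h', H.mul_mem hh hh', ?_⟩
        show (π (h * h')) ξ = f ((π h') ξ)
        rw [map_mul]
        rfl
      have : f '' C ⊆ C := by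
        refine h2.trans ?_
        rw [h3]
        exact closure_mono (convexHull_mono h4)
      exact this h1
    -- hence the minimal norm point is H-invariant
    have hcinv : ∀ h ∈ H, π h c = c := by
      intro h hh
      refine min_norm_unique hCconv (hCinv h hh c hcC) hcC ?_ hcmin
      rw [(π h).norm_map]
      exact hcmin
    -- c is close to ξ, hence nonzero
    have hdist : ‖c - ξ‖ ≤ δ := by
      have := hball hcC
      rwa [Metric.mem_closedBall, dist_eq_norm] at this
    have hcnorm : (1 : ℝ) - δ ≤ ‖c‖ := by
      have h1 : ‖ξ‖ - ‖c‖ ≤ ‖ξ - c‖ := norm_sub_norm_le ξ c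
      rw [norm_sub_rev] at h1
      linarith [hξ1 ▸ h1]
    have hcpos : (0 : ℝ) < ‖c‖ := by linarith
    -- the normalized invariant vector
    refine ⟨((‖c‖ : ℂ))⁻¹ • c, ?_, ?_, ?_⟩
    · rw [norm_smul]
      simp only [norm_inv, Complex.norm_real, Real.norm_eq_abs, abs_of_pos hcpos]
      field_simp
    · intro h hh
      rw [map_smul, hcinv h hh]
    · intro g hg
      have hgQ : g ∈ Qpre := Or.inl hg
      have hgξ : ‖π g ξ - ξ‖ < δ := hbound g hgQ
      have hgc : ‖π g c - c‖ < 3 * δ := by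
        have t1 : ‖π g c - π g ξ‖ = ‖c - ξ‖ := by
          rw [← map_sub, (π g).norm_map]
        have t4 : ‖π g c - c‖ ≤ ‖π g c - π g ξ‖ + ‖π g ξ - ξ‖ + ‖ξ - c‖ := by
          have := dist_triangle4 (π g c) (π g ξ) ξ c
          simpa [dist_eq_norm] using this
        rw [t1, norm_sub_rev ξ c] at t4
        linarith
      have key : π g (((‖c‖ : ℂ))⁻¹ • c) - ((‖c‖ : ℂ))⁻¹ • c
          = ((‖c‖ : ℂ))⁻¹ • (π g c - c) := by
        rw [map_smul, smul_sub]
      rw [key, norm_smul]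
      have hnorminv : ‖((‖c‖ : ℂ))⁻¹‖ = ‖c‖⁻¹ := by
        simp [abs_of_pos hcpos]
      rw [hnorminv]
      have hinvle : ‖c‖⁻¹ ≤ 2 := by
        rw [inv_le_comm₀ hcpos (by norm_num)]
        linarith
      calc ‖c‖⁻¹ * ‖π g c - c‖ ≤ 2 * ‖π g c - c‖ := by
            apply mul_le_mul_of_nonneg_right hinvle (norm_nonneg _)
      _ < 2 * (3 * δ) := by
            apply mul_lt_mul_of_pos_left hgc (by norm_num)
      _ ≤ ε * 6 / 7 := by linarith
      _ < ε := by linarith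

end
end

section
/- Let (G, Γ) be a discrete Hecke pair, let R^Γ = ⋂_{g∈G} gΓg⁻¹ (a normal subgroup of G contained in Γ), and let (G_r, Γ_r) = (G/R^Γ, Γ/R^Γ) be the reduction of (G, Γ). Then the pair (G, Γ) has property (T) if and only if the pair (G_r, Γ_r) has property (T). -/
noncomputable section

/-AUXSTART-/
section Aux

set_option linter.unusedSectionVars false

lemma discreteTopology_quot {α : Type*} [TopologicalSpace α] [DiscreteTopology α]
    (s : Setoid α) : DiscreteTopology (Quotient s) :=
  discreteTopology_iff_isOpen_singleton.mpr fun _ => isOpen_coinduced.mpr (isOpen_discrete _)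

variable {G : Type*} [Group G]

/-- The natural map `G ⧸ Γ → (G ⧸ N) ⧸ (Γ/N)` where `N` is the normal core. -/
def redMap (Γ : Subgroup G) :
    G ⧸ Γ → (G ⧸ Γ.normalCore) ⧸ (Γ.map (QuotientGroup.mk' Γ.normalCore)) :=
  fun x => Quotient.liftOn' x (fun g => QuotientGroup.mk (QuotientGroup.mk g))
    (by
      intro a b hab
      rw [QuotientGroup.leftRel_apply] at hab
      rw [QuotientGroup.eq]
      have : ((QuotientGroup.mk a : G ⧸ Γ.normalCore))⁻¹ * QuotientGroup.mk b
          = QuotientGroup.mk (a⁻¹ * b) := by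
        simp [QuotientGroup.mk_mul, QuotientGroup.mk_inv]
      rw [this]
      exact ⟨a⁻¹ * b, hab, rfl⟩)

lemma redMap_mk (Γ : Subgroup G) (g : G) :
    redMap Γ (QuotientGroup.mk g) = QuotientGroup.mk (QuotientGroup.mk g) := rfl

lemma redMap_injective (Γ : Subgroup G) : Function.Injective (redMap Γ) := by
  intro x y hxy
  induction x using QuotientGroup.induction_on with
  | H a =>
  induction y using QuotientGroup.induction_on with
  | H b =>
  rw [redMap_mk, redMap_mk, QuotientGroup.eq] at hxy
  have : ((QuotientGroup.mk a : G ⧸ Γ.normalCore))⁻¹ * QuotientGroup.mk b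
      = QuotientGroup.mk (a⁻¹ * b) := by
    simp [QuotientGroup.mk_mul, QuotientGroup.mk_inv]
  rw [this] at hxy
  obtain ⟨γ, hγ, hγeq⟩ := hxy
  rw [QuotientGroup.eq]
  have hγeq' : (QuotientGroup.mk γ : G ⧸ Γ.normalCore) = QuotientGroup.mk (a⁻¹ * b) := hγeq
  rw [QuotientGroup.eq] at hγeq'
  have : γ⁻¹ * (a⁻¹ * b) ∈ Γ := Γ.normalCore_le hγeq'
  have : γ * (γ⁻¹ * (a⁻¹ * b)) ∈ Γ := Γ.mul_mem hγ this
  simpa [mul_assoc] using this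

variable {E : Type} [NormedAddCommGroup E] [InnerProductSpace ℂ E]
  [CompleteSpace E] (N : Subgroup G) [N.Normal] (π : G →* (E ≃ₗᵢ[ℂ] E))

/-- The subspace of `N`-invariant vectors. -/
def invSubmodule : Submodule ℂ E where
  carrier := {ξ | ∀ n ∈ N, π n ξ = ξ}
  add_mem' := fun ha hb n hn => by simp [map_add, ha n hn, hb n hn]
  zero_mem' := fun n hn => by simp
  smul_mem' := fun c ξ hξ n hn => by simp [map_smul, hξ n hn]

lemma invSubmodule_mem {ξ : E} : ξ ∈ invSubmodule N π ↔ ∀ n ∈ N, π n ξ = ξ := Iff.rfl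

lemma isClosed_invSubmodule : IsClosed ((invSubmodule N π : Set E)) := by
  have : (invSubmodule N π : Set E) = ⋂ n ∈ N, {ξ | π n ξ = ξ} := by
    ext ξ; simp [invSubmodule_mem]
  rw [this]
  exact isClosed_biInter fun n _ => isClosed_eq (π n).continuous continuous_id

lemma maps_invSubmodule (g : G) {ξ : E} (hξ : ξ ∈ invSubmodule N π) :
    π g ξ ∈ invSubmodule N π := by
  intro n hn
  have h1 : g⁻¹ * n * g ∈ N := Subgroup.Normal.conj_mem' ‹N.Normal› n hn g
  have := hξ _ h1
  calc π n (π g ξ) = π (n * g) ξ := by rw [map_mul]; rfl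
    _ = π (g * (g⁻¹ * n * g)) ξ := by group
    _ = π g (π (g⁻¹ * n * g) ξ) := by rw [map_mul]; rfl
    _ = π g ξ := by rw [this]

/-- The restriction of `π g` to the invariant subspace. -/
def resIso (g : G) : (invSubmodule N π) ≃ₗᵢ[ℂ] (invSubmodule N π) where
  toFun := fun ξ => ⟨π g ξ, maps_invSubmodule N π g ξ.2⟩
  invFun := fun ξ => ⟨π g⁻¹ ξ, maps_invSubmodule N π g⁻¹ ξ.2⟩
  left_inv := fun ξ => by
    ext
    have : π g⁻¹ ((π g) (ξ : E)) = (π g⁻¹ * π g) (ξ : E) := rfl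
    show π g⁻¹ (π g ξ) = ξ
    rw [this, ← map_mul]; simp
  right_inv := fun ξ => by
    ext
    have : π g ((π g⁻¹) (ξ : E)) = (π g * π g⁻¹) (ξ : E) := rfl
    show π g (π g⁻¹ ξ) = ξ
    rw [this, ← map_mul]; simp
  map_add' := fun a b => by ext; simp [map_add]
  map_smul' := fun c a => by ext; simp [map_smul]
  norm_map' := fun ξ => (π g).norm_map (ξ : E)

/-- The restriction of `π` to the invariant subspace, as a homomorphism. -/
def resHom : G →* ((invSubmodule N π) ≃ₗᵢ[ℂ] (invSubmodule N π)) where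
  toFun := resIso N π
  map_one' := by
    apply LinearIsometryEquiv.ext
    intro ξ
    apply Subtype.ext
    show π 1 (ξ : E) = ξ
    simp
  map_mul' := fun a b => by
    apply LinearIsometryEquiv.ext
    intro ξ
    apply Subtype.ext
    show π (a * b) (ξ : E) = π a (π b (ξ : E))
    rw [map_mul]; rfl

lemma resHom_apply (g : G) (ξ : invSubmodule N π) :
    ((resHom N π g ξ : invSubmodule N π) : E) = π g (ξ : E) := rfl

end Aux

/-- Let `(G, Γ)` be a discrete Hecke pair (every double coset `ΓgΓ`
contains finitely many left cosets), let `R^Γ = ⋂_{g ∈ G} gΓg⁻¹` be the normal core of `Γ`,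
and let `(G_r, Γ_r) = (G/R^Γ, Γ/R^Γ)` be the reduction of `(G, Γ)`.  Then `(G, Γ)` has
property (T) if and only if `(G_r, Γ_r)` has property (T). -/
theorem heckePair_T_iff_reduction_T {G : Type*} [Group G] [TopologicalSpace G]
    [DiscreteTopology G] (Γ : Subgroup G)
    (hHecke : ∀ g : G,
      {x : G ⧸ Γ | ∃ γ ∈ Γ, x = QuotientGroup.mk (γ * g)}.Finite) :
    HasPropertyTPair G Γ ↔
      HasPropertyTPair (G ⧸ Γ.normalCore)
        (Γ.map (QuotientGroup.mk' Γ.normalCore)) := by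
  haveI hd1 : DiscreteTopology (G ⧸ Γ.normalCore) := discreteTopology_quot _
  haveI hd2 : DiscreteTopology (G ⧸ Γ) := discreteTopology_quot _
  haveI hd3 : DiscreteTopology
      ((G ⧸ Γ.normalCore) ⧸ (Γ.map (QuotientGroup.mk' Γ.normalCore))) :=
    discreteTopology_quot _
  constructor
  · -- forward
    intro hT E i1 i2 i3 πr hcont halmost
    let π : G →* (E ≃ₗᵢ[ℂ] E) := πr.comp (QuotientGroup.mk' Γ.normalCore)
    obtain ⟨ξ, hξ0, hξinv⟩ := hT E i1 i2 i3 π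
      (fun ξ => continuous_of_discreteTopology)
      (by
        intro ε hε Q hQ
        obtain ⟨ξ, hnorm, hΓ, hball⟩ := halmost ε hε (redMap Γ '' Q)
          (hQ.image continuous_of_discreteTopology)
        refine ⟨ξ, hnorm, fun γ hγ => ?_, fun g hg => ?_⟩
        · exact hΓ (QuotientGroup.mk γ) ⟨γ, hγ, rfl⟩
        · exact hball (QuotientGroup.mk g) ⟨QuotientGroup.mk g, hg, rfl⟩)
    refine ⟨ξ, hξ0, fun y => ?_⟩
    induction y using QuotientGroup.induction_on with
    | H g => exact hξinv g
  · -- backward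
    intro hT E i1 i2 i3 π hcont halmost
    set N := Γ.normalCore with hN
    haveI : CompleteSpace (invSubmodule N π) :=
      (isClosed_invSubmodule N π).completeSpace_coe
    have hlift_triv : ∀ n ∈ N, resHom N π n = 1 := by
      intro n hn
      apply LinearIsometryEquiv.ext
      intro ξ
      apply Subtype.ext
      show π n (ξ : E) = ξ
      exact ξ.2 n hn
    let πr : G ⧸ N →* ((invSubmodule N π) ≃ₗᵢ[ℂ] (invSubmodule N π)) :=
      QuotientGroup.lift N (resHom N π) hlift_triv
    have hπr_mk : ∀ g : G, πr (QuotientGroup.mk g) = resHom N π g := fun g => rfl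
    obtain ⟨ξ, hξ0, hξinv⟩ := hT (invSubmodule N π) inferInstance inferInstance
      inferInstance πr (fun ξ => continuous_of_discreteTopology)
      (by
        intro ε hε Q' hQ'
        have hQfin : (redMap Γ ⁻¹' Q').Finite :=
          (hQ'.finite_of_discrete).preimage (redMap_injective Γ).injOn
        obtain ⟨ξ, hnorm, hΓ, hball⟩ := halmost ε hε (redMap Γ ⁻¹' Q') hQfin.isCompact
        have hξmem : ξ ∈ invSubmodule N π := fun n hn => hΓ n (Γ.normalCore_le hn)
        refine ⟨⟨ξ, hξmem⟩, hnorm, fun h hh => ?_, fun y hy => ?_⟩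
        · obtain ⟨γ, hγ, rfl⟩ := hh
          apply Subtype.ext
          show π γ ξ = ξ
          exact hΓ γ hγ
        · induction y using QuotientGroup.induction_on with
          | H g =>
            have hmem : QuotientGroup.mk g ∈ redMap Γ ⁻¹' Q' := hy
            have := hball g hmem
            show ‖(⟨π g ξ, _⟩ : invSubmodule N π) - ⟨ξ, hξmem⟩‖ < ε
            rw [show ((⟨π g ξ, maps_invSubmodule N π g hξmem⟩ : invSubmodule N π)
              - ⟨ξ, hξmem⟩) = ⟨π g ξ - ξ, by
                exact Submodule.sub_mem _ (maps_invSubmodule N π g hξmem) hξmem⟩ from rfl]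
            exact this)
    refine ⟨(ξ : E), fun h => hξ0 (Subtype.ext h), fun g => ?_⟩
    have := hξinv (QuotientGroup.mk g)
    exact congrArg Subtype.val this


end
end
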